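/- (Inclusion property of trimmed serendipity spaces) For n, r ≥ 1 and 0 ≤ k ≤ n: S_rΛ^k(ℝ^n) ⊆ S_{r+1}^−Λ^k(ℝ^n) ⊆ S_{r+1}Λ^k(ℝ^n). -/

import Mathlib

open MvPolynomial

/-- Polynomial differential forms on `ℝ^n`: a family of polynomial coefficients indexed by
subsets `σ ⊆ {1,…,n}`; a `k`-form is supported on sets of cardinality `k`. -/
abbrev PolyForm (n : ℕ) := Finset (Fin n) → MvPolynomial (Fin n) ℝ

/-- The sign `(-1)^{#{j ∈ σ : j < i}}`. -/
noncomputable def sgn {n : ℕ} (σ : Finset (Fin n)) (i : Fin n) : MvPolynomial (Fin n) ℝ :=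
  (-1) ^ (σ.filter (fun j => j < i)).card

/-- The exterior derivative `d`. -/
noncomputable def extD (n : ℕ) : PolyForm n →ₗ[ℝ] PolyForm n where
  toFun ω := fun σ => ∑ i ∈ σ, sgn σ i * pderiv i (ω (σ.erase i))
  map_add' ω η := by
    funext σ
    simp [Pi.add_apply, mul_add, Finset.sum_add_distrib]
  map_smul' c ω := by
    funext σ
    simp [Pi.smul_apply, Finset.smul_sum, mul_smul_comm]

/-- The Koszul operator `κ` (contraction with the position vector field). -/
noncomputable def koszul (n : ℕ) : PolyForm n →ₗ[ℝ] PolyForm n where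
  toFun ω := fun σ => ∑ i ∈ σᶜ, sgn σ i * X i * ω (insert i σ)
  map_add' ω η := by
    funext σ
    simp [Pi.add_apply, mul_add, Finset.sum_add_distrib]
  map_smul' c ω := by
    funext σ
    simp [Pi.smul_apply, Finset.smul_sum, mul_smul_comm]

/-- The space of (polynomial) differential `k`-forms: families supported on index sets of
cardinality `k`. -/
noncomputable def Lambda (n k : ℕ) : Submodule ℝ (PolyForm n) where
  carrier := {ω | ∀ σ, σ.card ≠ k → ω σ = 0}
  zero_mem' := fun σ _ => rfl
  add_mem' := fun ha hb σ h => by simp only [Pi.add_apply, ha σ h, hb σ h, add_zero]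
  smul_mem' := fun c ω h σ hσ => by simp only [Pi.smul_apply, h σ hσ, smul_zero]

/-- The form monomial `x^α dx_σ`. -/
noncomputable def formMonomial {n : ℕ} (α : Fin n →₀ ℕ) (σ : Finset (Fin n)) : PolyForm n :=
  fun τ => if τ = σ then monomial α 1 else 0

/-- The (total) degree `|α|` of a multi-index. -/
def mdeg {n : ℕ} (α : Fin n →₀ ℕ) : ℕ := α.sum fun _ m => m

/-- The linear degree of the form monomial `x^α dx_σ`: the number of `i ∉ σ` with `α i = 1`. -/
def ldeg {n : ℕ} (α : Fin n →₀ ℕ) (σ : Finset (Fin n)) : ℕ :=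
  ((σᶜ).filter fun i => α i = 1).card

/-- `H_rΛ^k(ℝ^n)`: `k`-forms with homogeneous degree-`r` polynomial coefficients. -/
noncomputable def Hspace (n r k : ℕ) : Submodule ℝ (PolyForm n) :=
  Submodule.span ℝ {ω | ∃ α σ, σ.card = k ∧ mdeg α = r ∧ ω = formMonomial α σ}

/-- `P_rΛ^k(ℝ^n)`: `k`-forms with polynomial coefficients of degree at most `r`. -/
noncomputable def Pspace (n r k : ℕ) : Submodule ℝ (PolyForm n) :=
  Submodule.span ℝ {ω | ∃ α σ, σ.card = k ∧ mdeg α ≤ r ∧ ω = formMonomial α σ}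

/-- `H_{r,l}Λ^k(ℝ^n)`: homogeneous degree-`r` `k`-forms of linear degree at least `l`. -/
noncomputable def Hl (n r l k : ℕ) : Submodule ℝ (PolyForm n) :=
  Submodule.span ℝ
    {ω | ∃ α σ, σ.card = k ∧ mdeg α = r ∧ l ≤ ldeg α σ ∧ ω = formMonomial α σ}

/-- `J_rΛ^k(ℝ^n) := Σ_{l ≥ 1} κ H_{r+l-1, l}Λ^{k+1}(ℝ^n)` (here `l` is reindexed as `l+1`). -/
noncomputable def Jspace (n r k : ℕ) : Submodule ℝ (PolyForm n) :=
  ⨆ l : ℕ, Submodule.map (koszul n) (Hl n (r + l) (l + 1) (k + 1))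

/-- The trimmed polynomial space `P_r^-Λ^k := P_{r-1}Λ^k ⊕ κ H_{r-1}Λ^{k+1}`. -/
noncomputable def PminusSpace (n r k : ℕ) : Submodule ℝ (PolyForm n) :=
  Pspace n (r - 1) k ⊔ Submodule.map (koszul n) (Hspace n (r - 1) (k + 1))

/-- The serendipity space `S_rΛ^k := P_rΛ^k + J_rΛ^k + d J_{r+1}Λ^{k-1}`
(the last summand being absent for `k = 0`). -/
noncomputable def Sspace (n r k : ℕ) : Submodule ℝ (PolyForm n) :=
  Pspace n r k ⊔ Jspace n r k ⊔
    (if k = 0 then ⊥ else Submodule.map (extD n) (Jspace n (r + 1) (k - 1)))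

/-- The trimmed serendipity space `S_r^-Λ^k := S_{r-1}Λ^k + κ S_{r-1}Λ^{k+1}`. -/
noncomputable def SminusSpace (n r k : ℕ) : Submodule ℝ (PolyForm n) :=
  Sspace n (r - 1) k ⊔ Submodule.map (koszul n) (Sspace n (r - 1) (k + 1))


section Aux
variable {n : ℕ}

lemma sgn_C (σ : Finset (Fin n)) (i : Fin n) :
    sgn σ i = C ((-1 : ℝ) ^ (σ.filter (fun j => j < i)).card) := by
  rw [sgn, map_pow, map_neg, map_one]

lemma sgn_mul_self (σ : Finset (Fin n)) (i : Fin n) : sgn σ i * sgn σ i = 1 := by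
  rw [sgn, ← mul_pow]; norm_num

lemma filter_lt_insert_self (s : Finset (Fin n)) (i : Fin n) :
    (insert i s).filter (fun j => j < i) = s.filter (fun j => j < i) := by
  rw [Finset.filter_insert, if_neg (lt_irrefl i)]

lemma filter_lt_erase_self (s : Finset (Fin n)) (i : Fin n) :
    (s.erase i).filter (fun j => j < i) = s.filter (fun j => j < i) := by
  rw [Finset.filter_erase, Finset.erase_eq_of_notMem]
  simp

lemma sgn_insert_self (σ : Finset (Fin n)) (i : Fin n) : sgn (insert i σ) i = sgn σ i := by
  rw [sgn, sgn, filter_lt_insert_self]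

lemma sgn_erase_self (σ : Finset (Fin n)) (i : Fin n) : sgn (σ.erase i) i = sgn σ i := by
  rw [sgn, sgn, filter_lt_erase_self]

lemma card_filter_insert {s : Finset (Fin n)} {i : Fin n} (h : i ∉ s) (m : Fin n) :
    ((insert i s).filter (fun j => j < m)).card
      = (s.filter (fun j => j < m)).card + (if i < m then 1 else 0) := by
  rw [Finset.filter_insert]
  split
  · rw [Finset.card_insert_of_notMem (by simp [h])]
  · simp

lemma card_filter_of_erase {s : Finset (Fin n)} {i : Fin n} (h : i ∈ s) (m : Fin n) :
    (s.filter (fun j => j < m)).card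
      = ((s.erase i).filter (fun j => j < m)).card + (if i < m then 1 else 0) := by
  conv_lhs => rw [← Finset.insert_erase h]
  exact card_filter_insert (Finset.notMem_erase i s) m

lemma sgn_cancel1 {σ : Finset (Fin n)} {i j : Fin n} (hi : i ∉ σ) (hj : j ∉ σ) (hij : i ≠ j) :
    sgn σ i * sgn (insert i σ) j = -(sgn σ j * sgn (insert j σ) i) := by
  rw [sgn_C, sgn_C, sgn_C, sgn_C, card_filter_insert hi, card_filter_insert hj,
    ← map_mul, ← map_mul, ← map_neg, ← pow_add, ← pow_add]
  congr 1
  rcases hij.lt_or_gt with h | h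
  · rw [if_pos h, if_neg (asymm h)]
    ring_nf
  · rw [if_neg (asymm h), if_pos h]
    ring_nf

lemma sgn_cancel2 {σ : Finset (Fin n)} {p q : Fin n} (hp : p ∈ σ) (hq : q ∉ σ) :
    sgn σ q * sgn (insert q σ) p = -(sgn σ p * sgn (σ.erase p) q) := by
  have hpq : p ≠ q := fun h => hq (h ▸ hp)
  rw [sgn_C, sgn_C, sgn_C, sgn_C, card_filter_insert hq,
    card_filter_of_erase hp q, ← map_mul, ← map_mul, ← map_neg, ← pow_add, ← pow_add]
  congr 1
  rcases hpq.lt_or_gt with h | h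
  · rw [if_neg (asymm h), if_pos h]
    ring_nf
  · rw [if_pos h, if_neg (asymm h)]
    ring_nf

lemma mdeg_add (α β : Fin n →₀ ℕ) : mdeg (α + β) = mdeg α + mdeg β := by
  unfold mdeg
  exact Finsupp.sum_add_index' (fun _ => rfl) (fun _ _ _ => rfl)

lemma mdeg_single (i : Fin n) (m : ℕ) : mdeg (Finsupp.single i m) = m := by
  unfold mdeg
  exact Finsupp.sum_single_index rfl

lemma mdeg_eq_sum (α : Fin n →₀ ℕ) : mdeg α = ∑ i, α i :=
  Finsupp.sum_fintype _ _ (fun _ => rfl)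

lemma sub_add_single {α : Fin n →₀ ℕ} {i : Fin n} (h : α i ≠ 0) :
    (α - Finsupp.single i 1) + Finsupp.single i 1 = α := by
  ext j
  by_cases hj : j = i
  · subst hj
    simp [Nat.sub_add_cancel (Nat.one_le_iff_ne_zero.mpr h)]
  · simp [Finsupp.single_apply, Ne.symm hj]

lemma mdeg_sub_single {α : Fin n →₀ ℕ} {i : Fin n} (h : α i ≠ 0) :
    mdeg (α - Finsupp.single i 1) + 1 = mdeg α := by
  conv_rhs => rw [← sub_add_single h]
  rw [mdeg_add, mdeg_single]

lemma koszul_apply (ω : PolyForm n) (σ : Finset (Fin n)) :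
    koszul n ω σ = ∑ i ∈ σᶜ, sgn σ i * X i * ω (insert i σ) := rfl

lemma extD_apply (ω : PolyForm n) (σ : Finset (Fin n)) :
    extD n ω σ = ∑ i ∈ σ, sgn σ i * pderiv i (ω (σ.erase i)) := rfl

end Aux

section Formulas
variable {n : ℕ}

lemma insert_eq_iff' {σ τ : Finset (Fin n)} {i : Fin n} (hi : i ∉ σ) :
    insert i σ = τ ↔ i ∈ τ ∧ σ = τ.erase i := by
  constructor
  · rintro rfl
    exact ⟨Finset.mem_insert_self i σ, (Finset.erase_insert hi).symm⟩
  · rintro ⟨hiτ, rfl⟩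
    exact Finset.insert_erase hiτ

lemma koszul_formMonomial (α : Fin n →₀ ℕ) (τ : Finset (Fin n)) :
    koszul n (formMonomial α τ) =
      ∑ i ∈ τ, ((-1 : ℝ) ^ (((τ.erase i).filter (fun j => j < i)).card)) •
        formMonomial (α + Finsupp.single i 1) (τ.erase i) := by
  funext σ
  rw [koszul_apply]
  rw [show (∑ i ∈ τ, ((-1 : ℝ) ^ (((τ.erase i).filter (fun j => j < i)).card)) •
        formMonomial (α + Finsupp.single i 1) (τ.erase i)) σ
      = ∑ i ∈ τ, ((-1 : ℝ) ^ (((τ.erase i).filter (fun j => j < i)).card)) •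
        (formMonomial (α + Finsupp.single i 1) (τ.erase i) σ) from by
    simp [Finset.sum_apply]]
  rw [← Finset.sum_filter_add_sum_filter_not τ (fun i => σ = τ.erase i)]
  rw [← Finset.sum_filter_add_sum_filter_not σᶜ (fun i => insert i σ = τ)]
  have key : ∀ s t : Finset (Fin n), ∀ f : Fin n → MvPolynomial (Fin n) ℝ,
      ∀ g : Fin n → MvPolynomial (Fin n) ℝ,
      (∀ i ∈ s, f i = 0) → (∀ i ∈ t, g i = 0) → True := fun _ _ _ _ _ _ => trivial
  have h2 : ∑ i ∈ σᶜ.filter (fun i => ¬ insert i σ = τ), sgn σ i * X i * formMonomial α τ (insert i σ) = 0 := by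
    apply Finset.sum_eq_zero
    intro i hi
    rw [Finset.mem_filter] at hi
    rw [show formMonomial α τ (insert i σ) = 0 from if_neg hi.2]
    ring
  have h3 : ∑ i ∈ τ.filter (fun i => ¬ σ = τ.erase i),
      ((-1 : ℝ) ^ (((τ.erase i).filter (fun j => j < i)).card)) •
        (formMonomial (α + Finsupp.single i 1) (τ.erase i) σ) = 0 := by
    apply Finset.sum_eq_zero
    intro i hi
    rw [Finset.mem_filter] at hi
    rw [show formMonomial (α + Finsupp.single i 1) (τ.erase i) σ = 0 from if_neg hi.2]
    simp
  rw [h2, h3, add_zero, add_zero]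
  apply Finset.sum_congr
  · ext i
    simp only [Finset.mem_filter, Finset.mem_compl]
    constructor
    · rintro ⟨hi, he⟩
      exact ⟨((insert_eq_iff' hi).mp he).1, ((insert_eq_iff' hi).mp he).2⟩
    · rintro ⟨hiτ, he⟩
      have hi : i ∉ σ := he ▸ Finset.notMem_erase i τ
      exact ⟨hi, (insert_eq_iff' hi).mpr ⟨hiτ, he⟩⟩
  · intro i hi
    rw [Finset.mem_filter] at hi
    obtain ⟨hiτ, he⟩ := hi
    rw [show formMonomial α τ (insert i σ) = monomial α 1 from
      if_pos ((insert_eq_iff' (he ▸ Finset.notMem_erase i τ)).mpr ⟨hiτ, he⟩),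
      show formMonomial (α + Finsupp.single i 1) (τ.erase i) σ = monomial (α + Finsupp.single i 1) 1 from if_pos he]
    rw [sgn_C, he, smul_monomial, smul_eq_mul, mul_one, add_comm α (Finsupp.single i 1), monomial_single_add,
      pow_one, mul_comm (C _) (X i), mul_assoc, C_mul_monomial, mul_one]

lemma extD_formMonomial (α : Fin n →₀ ℕ) (τ : Finset (Fin n)) :
    extD n (formMonomial α τ) =
      ∑ i ∈ τᶜ, (((-1 : ℝ) ^ ((τ.filter (fun j => j < i)).card)) * (α i : ℝ)) •
        formMonomial (α - Finsupp.single i 1) (insert i τ) := by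
  funext σ
  rw [extD_apply]
  rw [show (∑ i ∈ τᶜ, (((-1 : ℝ) ^ ((τ.filter (fun j => j < i)).card)) * (α i : ℝ)) •
        formMonomial (α - Finsupp.single i 1) (insert i τ)) σ
      = ∑ i ∈ τᶜ, (((-1 : ℝ) ^ ((τ.filter (fun j => j < i)).card)) * (α i : ℝ)) •
        (formMonomial (α - Finsupp.single i 1) (insert i τ) σ) from by
    simp [Finset.sum_apply]]
  rw [← Finset.sum_filter_add_sum_filter_not σ (fun i => σ.erase i = τ)]
  rw [← Finset.sum_filter_add_sum_filter_not τᶜ (fun i => σ = insert i τ)]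
  have h2 : ∑ i ∈ σ.filter (fun i => ¬ σ.erase i = τ), sgn σ i * pderiv i (formMonomial α τ (σ.erase i)) = 0 := by
    apply Finset.sum_eq_zero
    intro i hi
    rw [Finset.mem_filter] at hi
    rw [show formMonomial α τ (σ.erase i) = 0 from if_neg hi.2]
    simp
  have h3 : ∑ i ∈ τᶜ.filter (fun i => ¬ σ = insert i τ),
      (((-1 : ℝ) ^ ((τ.filter (fun j => j < i)).card)) * (α i : ℝ)) •
        (formMonomial (α - Finsupp.single i 1) (insert i τ) σ) = 0 := by
    apply Finset.sum_eq_zero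
    intro i hi
    rw [Finset.mem_filter] at hi
    rw [show formMonomial (α - Finsupp.single i 1) (insert i τ) σ = 0 from if_neg hi.2]
    simp
  rw [h2, h3, add_zero, add_zero]
  have hequiv : ∀ i, (i ∈ σ ∧ σ.erase i = τ) ↔ (i ∉ τ ∧ σ = insert i τ) := by
    intro i
    constructor
    · rintro ⟨hi, rfl⟩
      exact ⟨Finset.notMem_erase i σ, (Finset.insert_erase hi).symm⟩
    · rintro ⟨hi, rfl⟩
      exact ⟨Finset.mem_insert_self i τ, Finset.erase_insert hi⟩
  apply Finset.sum_congr
  · ext i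
    simp only [Finset.mem_filter, Finset.mem_compl]
    exact hequiv i
  · intro i hi
    rw [Finset.mem_filter] at hi
    obtain ⟨hiτc, he⟩ := hi
    have hiτ : i ∉ τ := Finset.mem_compl.mp hiτc
    have h' : i ∈ σ ∧ σ.erase i = τ := (hequiv i).mpr ⟨hiτ, he⟩
    rw [show formMonomial α τ (σ.erase i) = monomial α 1 from if_pos h'.2,
      show formMonomial (α - Finsupp.single i 1) (insert i τ) σ = monomial (α - Finsupp.single i 1) 1 from if_pos he]
    rw [sgn_C, he, pderiv_monomial, one_mul, filter_lt_insert_self, smul_monomial, smul_eq_mul, mul_one,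
      C_mul_monomial]

end Formulas

section KK
variable {n : ℕ}

lemma koszul_koszul (ω : PolyForm n) : koszul n (koszul n ω) = 0 := by
  funext σ
  show (koszul n (koszul n ω)) σ = 0
  rw [koszul_apply]
  set f : Fin n → Fin n → MvPolynomial (Fin n) ℝ := fun i j =>
    if j ≠ i then sgn σ i * sgn (insert i σ) j * (X i * X j * ω (insert j (insert i σ))) else 0
    with hf
  have step : ∀ i ∈ σᶜ, sgn σ i * X i * (koszul n ω (insert i σ)) = ∑ j ∈ σᶜ, f i j := by
    intro i hi
    rw [koszul_apply, Finset.compl_insert, ← Finset.filter_ne', Finset.mul_sum, Finset.sum_filter]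
    refine Finset.sum_congr rfl (fun j _ => ?_)
    by_cases hji : j ≠ i
    · simp only [hf, if_pos hji]
      ring
    · simp only [hf, if_neg hji]
  rw [Finset.sum_congr rfl step]
  have anti : ∀ i j : Fin n, i ∈ σᶜ → j ∈ σᶜ → f i j = -f j i := by
    intro i j hi hj
    by_cases hij : i = j
    · subst hij; simp [hf]
    · rw [hf]
      simp only
      rw [if_pos (Ne.symm hij), if_pos hij,
        sgn_cancel1 (Finset.mem_compl.mp hi) (Finset.mem_compl.mp hj) hij,
        Finset.insert_comm j i σ, mul_comm (X i) (X j)]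
      ring
  have hswap : (∑ i ∈ σᶜ, ∑ j ∈ σᶜ, f i j) = -(∑ i ∈ σᶜ, ∑ j ∈ σᶜ, f i j) := by
    calc (∑ i ∈ σᶜ, ∑ j ∈ σᶜ, f i j) = ∑ j ∈ σᶜ, ∑ i ∈ σᶜ, f i j := Finset.sum_comm
    _ = ∑ j ∈ σᶜ, ∑ i ∈ σᶜ, -f j i := by
        refine Finset.sum_congr rfl fun j hj => Finset.sum_congr rfl fun i hi => anti i j hi hj
    _ = -(∑ j ∈ σᶜ, ∑ i ∈ σᶜ, f j i) := by
        simp [Finset.sum_neg_distrib]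
  have h2 : (∑ i ∈ σᶜ, ∑ j ∈ σᶜ, f i j) + (∑ i ∈ σᶜ, ∑ j ∈ σᶜ, f i j) = 0 := by
    nth_rewrite 1 [hswap]
    exact neg_add_cancel _
  exact add_self_eq_zero.mp h2

end KK

section Spaces
variable {n : ℕ}

lemma Pspace_mono {r r' k : ℕ} (h : r ≤ r') : Pspace n r k ≤ Pspace n r' k :=
  Submodule.span_mono (by rintro ω ⟨α, σ, h1, h2, rfl⟩; exact ⟨α, σ, h1, h2.trans h, rfl⟩)

lemma Hl_mono {r l l' k : ℕ} (h : l' ≤ l) : Hl n r l k ≤ Hl n r l' k :=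
  Submodule.span_mono (by rintro ω ⟨α, σ, h1, h2, h3, rfl⟩; exact ⟨α, σ, h1, h2, h.trans h3, rfl⟩)

lemma Hl_le_H {r l k : ℕ} : Hl n r l k ≤ Hspace n r k :=
  Submodule.span_mono (by rintro ω ⟨α, σ, h1, h2, _, rfl⟩; exact ⟨α, σ, h1, h2, rfl⟩)

lemma H_le_P {r k : ℕ} : Hspace n r k ≤ Pspace n r k :=
  Submodule.span_mono (by rintro ω ⟨α, σ, h1, h2, rfl⟩; exact ⟨α, σ, h1, h2.le, rfl⟩)

lemma map_koszul_P {r k : ℕ} :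
    Submodule.map (koszul n) (Pspace n r (k + 1)) ≤ Pspace n (r + 1) k := by
  rw [Pspace, Submodule.map_span, Submodule.span_le]
  rintro _ ⟨ω, ⟨α, τ, h1, h2, rfl⟩, rfl⟩
  rw [SetLike.mem_coe, koszul_formMonomial]
  refine Submodule.sum_mem _ fun i hi => Submodule.smul_mem _ _ (Submodule.subset_span ?_)
  refine ⟨α + Finsupp.single i 1, τ.erase i, ?_, ?_, rfl⟩
  · rw [Finset.card_erase_of_mem hi, h1]
    omega
  · rw [mdeg_add, mdeg_single]
    omega


lemma map_koszul_H {r k : ℕ} :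
    Submodule.map (koszul n) (Hspace n r (k + 1)) ≤ Hspace n (r + 1) k := by
  rw [Hspace, Submodule.map_span, Submodule.span_le]
  rintro _ ⟨ω, ⟨α, τ, h1, h2, rfl⟩, rfl⟩
  rw [SetLike.mem_coe, koszul_formMonomial]
  refine Submodule.sum_mem _ fun i hi => Submodule.smul_mem _ _ (Submodule.subset_span ?_)
  refine ⟨α + Finsupp.single i 1, τ.erase i, ?_, ?_, rfl⟩
  · rw [Finset.card_erase_of_mem hi, h1]
    omega
  · rw [mdeg_add, mdeg_single, h2]

lemma map_extD_P {r j : ℕ} :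
    Submodule.map (extD n) (Pspace n (r + 1) j) ≤ Pspace n r (j + 1) := by
  rw [Pspace, Submodule.map_span, Submodule.span_le]
  rintro _ ⟨ω, ⟨α, τ, h1, h2, rfl⟩, rfl⟩
  rw [SetLike.mem_coe, extD_formMonomial]
  refine Submodule.sum_mem _ fun i hi => ?_
  by_cases hz : α i = 0
  · rw [hz]
    simp
  · refine Submodule.smul_mem _ _ (Submodule.subset_span ?_)
    refine ⟨α - Finsupp.single i 1, insert i τ, ?_, ?_, rfl⟩
    · rw [Finset.card_insert_of_notMem (Finset.mem_compl.mp hi), h1]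
    · have := mdeg_sub_single hz
      omega

lemma J_le {r k : ℕ} : Jspace n r k ≤ Pspace n (r + 1) k ⊔ Jspace n (r + 1) k := by
  rw [Jspace]
  refine iSup_le fun l => ?_
  match l with
  | 0 =>
    refine le_trans ?_ le_sup_left
    refine le_trans (Submodule.map_mono (le_trans Hl_le_H H_le_P)) ?_
    exact map_koszul_P (r := r + 0) (k := k) |>.trans (by rw [Nat.add_zero])
  | Nat.succ m =>
    refine le_trans ?_ le_sup_right
    rw [Jspace]
    refine le_trans ?_ (le_iSup _ m)
    refine Submodule.map_mono ?_
    rw [show r + (m + 1) = r + 1 + m by omega]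
    exact Hl_mono (by omega)

lemma J_le_ker {r k : ℕ} : Jspace n r (k + 1) ≤ LinearMap.ker (koszul n) := by
  rw [Jspace]
  refine iSup_le fun l => ?_
  rintro x ⟨y, _, rfl⟩
  rw [LinearMap.mem_ker, ← LinearMap.comp_apply,
    show (koszul n).comp (koszul n) = 0 from LinearMap.ext fun ω => koszul_koszul ω]
  rfl

end Spaces

section Cartan
variable {n : ℕ}

lemma pderiv_sgn_mul (i : Fin n) (σ' : Finset (Fin n)) (j : Fin n) (p : MvPolynomial (Fin n) ℝ) :
    pderiv i (sgn σ' j * p) = sgn σ' j * pderiv i p := by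
  rw [sgn_C, pderiv_C_mul]

lemma euler_mon (α : Fin n →₀ ℕ) :
    ∑ i : Fin n, X i * pderiv i (monomial α (1 : ℝ)) = ((mdeg α : ℕ) : ℝ) • monomial α 1 := by
  have key : ∀ i : Fin n, X i * pderiv i (monomial α (1 : ℝ)) = ((α i : ℕ) : ℝ) • monomial α 1 := by
    intro i
    rw [pderiv_monomial, one_mul]
    by_cases hz : α i = 0
    · simp [hz]
    · rw [smul_monomial, smul_eq_mul, mul_one]
      have hα : Finsupp.single i 1 + (α - Finsupp.single i 1) = α := by
        rw [add_comm]; exact sub_add_single hz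
      rw [show (X i : MvPolynomial (Fin n) ℝ) * monomial (α - Finsupp.single i 1) ((α i : ℝ))
          = monomial (Finsupp.single i 1 + (α - Finsupp.single i 1)) ((α i : ℝ)) from by
        rw [monomial_single_add, pow_one], hα]
  rw [Finset.sum_congr rfl (fun i _ => key i), ← Finset.sum_smul, mdeg_eq_sum]
  norm_num

lemma cartan_mon (α : Fin n →₀ ℕ) (τ : Finset (Fin n)) :
    koszul n (extD n (formMonomial α τ)) + extD n (koszul n (formMonomial α τ))
      = ((mdeg α + τ.card : ℕ) : ℝ) • formMonomial α τ := by
  set ω := formMonomial α τ with hω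
  funext σ
  show koszul n (extD n ω) σ + extD n (koszul n ω) σ
      = (((mdeg α + τ.card : ℕ) : ℝ) • ω) σ
  rw [koszul_apply, extD_apply]
  -- expand first double sum
  have step1 : ∀ i ∈ σᶜ, sgn σ i * X i * extD n ω (insert i σ)
      = X i * pderiv i (ω σ)
        + ∑ j ∈ σ, sgn σ i * sgn (insert i σ) j * (X i * pderiv j (ω (insert i (σ.erase j)))) := by
    intro i hi
    have hi' : i ∉ σ := Finset.mem_compl.mp hi
    rw [extD_apply, Finset.sum_insert hi', mul_add, Finset.mul_sum]
    refine congrArg₂ (· + ·) ?_ ?_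
    · rw [Finset.erase_insert hi', sgn_insert_self]
      rw [show sgn σ i * X i * (sgn σ i * pderiv i (ω σ))
          = sgn σ i * sgn σ i * (X i * pderiv i (ω σ)) from by ring, sgn_mul_self, one_mul]
    · refine Finset.sum_congr rfl fun j hj => ?_
      have hij : i ≠ j := fun h => hi' (h ▸ hj)
      rw [Finset.erase_insert_of_ne hij]
      ring
  have step2 : ∀ i ∈ σ, sgn σ i * pderiv i (koszul n ω (σ.erase i))
      = (ω σ + X i * pderiv i (ω σ))
        + ∑ j ∈ σᶜ, sgn σ i * sgn (σ.erase i) j * (X j * pderiv i (ω (insert j (σ.erase i)))) := by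
    intro i hi
    have hic : i ∉ σᶜ := by simp [hi]
    rw [koszul_apply, Finset.compl_erase, Finset.sum_insert hic, map_add, mul_add]
    refine congrArg₂ (· + ·) ?_ ?_
    · rw [Finset.insert_erase hi, sgn_erase_self, mul_assoc, pderiv_sgn_mul,
        show sgn σ i * (sgn σ i * pderiv i (X i * ω σ))
          = sgn σ i * sgn σ i * pderiv i (X i * ω σ) from by ring, sgn_mul_self, one_mul,
        pderiv_mul, pderiv_X_self, one_mul]
    · rw [map_sum, Finset.mul_sum]
      refine Finset.sum_congr rfl fun j hj => ?_
      have hji : j ≠ i := fun h => (Finset.mem_compl.mp hj) (h ▸ hi)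
      rw [mul_assoc, pderiv_sgn_mul, pderiv_mul, pderiv_X_of_ne hji, zero_mul, zero_add]
      ring
  rw [Finset.sum_congr rfl step1, Finset.sum_congr rfl step2,
    Finset.sum_add_distrib, Finset.sum_add_distrib, Finset.sum_add_distrib]
  -- off-diagonal cancellation
  have hoff : (∑ i ∈ σᶜ, ∑ j ∈ σ, sgn σ i * sgn (insert i σ) j * (X i * pderiv j (ω (insert i (σ.erase j)))))
      + ∑ i ∈ σ, ∑ j ∈ σᶜ, sgn σ i * sgn (σ.erase i) j * (X j * pderiv i (ω (insert j (σ.erase i)))) = 0 := by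
    rw [show (∑ i ∈ σ, ∑ j ∈ σᶜ, sgn σ i * sgn (σ.erase i) j * (X j * pderiv i (ω (insert j (σ.erase i)))))
        = ∑ i ∈ σᶜ, ∑ j ∈ σ, sgn σ j * sgn (σ.erase j) i * (X i * pderiv j (ω (insert i (σ.erase j)))) from
      Finset.sum_comm]
    rw [← Finset.sum_add_distrib]
    refine Finset.sum_eq_zero fun i hi => ?_
    rw [← Finset.sum_add_distrib]
    refine Finset.sum_eq_zero fun j hj => ?_
    rw [sgn_cancel2 hj (Finset.mem_compl.mp hi)]
    ring
  -- diagonal terms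
  have hdiag : (∑ i ∈ σᶜ, X i * pderiv i (ω σ)) + (∑ _i ∈ σ, ω σ)
        + (∑ i ∈ σ, X i * pderiv i (ω σ))
      = (((mdeg α + τ.card : ℕ) : ℝ) • ω) σ := by
    rw [Pi.smul_apply]
    by_cases hστ : σ = τ
    · subst hστ
      have hmon : ω σ = monomial α 1 := if_pos rfl
      rw [hmon, Finset.sum_const, ← Nat.cast_smul_eq_nsmul ℝ σ.card]
      have hc := Finset.sum_add_sum_compl σ (fun i => X i * pderiv i (monomial α (1 : ℝ)))
      have he := euler_mon α
      rw [smul_eq_C_mul] at he ⊢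
      rw [smul_eq_C_mul, Nat.cast_add, map_add]
      linear_combination hc + he
    · have hmon : ω σ = 0 := if_neg hστ
      simp [hmon]
  linear_combination hoff + hdiag
lemma cartan_span {R k : ℕ} {x : PolyForm n} (hx : x ∈ Hspace n R k) :
    koszul n (extD n x) + extD n (koszul n x) = ((R + k : ℕ) : ℝ) • x := by
  induction hx using Submodule.span_induction with
  | mem y hy =>
    obtain ⟨α, σ, h1, h2, rfl⟩ := hy
    rw [cartan_mon, h1, h2]
  | zero => simp
  | add y z _ _ hy hz => rw [map_add, map_add, map_add, map_add]; rw [smul_add, ← hy, ← hz]; ring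
  | smul a y _ hy =>
    rw [map_smul, map_smul, map_smul, map_smul, smul_comm (((R + k : ℕ) : ℝ)) a y, ← hy, smul_add]

lemma kdk {R k : ℕ} {x : PolyForm n} (hx : x ∈ Hspace n R (k + 1)) :
    koszul n (extD n (koszul n x)) = ((R + 1 + k : ℕ) : ℝ) • koszul n x := by
  have hκ : koszul n x ∈ Hspace n (R + 1) k := map_koszul_H ⟨x, hx, rfl⟩
  have h := cartan_span hκ
  rw [koszul_koszul, map_zero, add_zero] at h
  exact h

end Cartan

section Main
variable {n : ℕ}

lemma S_mono (r k : ℕ) : Sspace n r k ≤ Sspace n (r + 1) k := by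
  rw [Sspace, Sspace]
  refine sup_le (sup_le ?_ ?_) ?_
  · exact (Pspace_mono (Nat.le_succ r)).trans (le_sup_left.trans le_sup_left)
  · refine J_le.trans (sup_le ?_ ?_)
    · exact le_sup_left.trans le_sup_left
    · exact le_sup_right.trans le_sup_left
  · by_cases hk : k = 0
    · simp [hk]
    · rw [if_neg hk, if_neg hk]
      refine (Submodule.map_mono J_le).trans ?_
      rw [Submodule.map_sup]
      refine sup_le ?_ le_sup_right
      have h := map_extD_P (n := n) (r := r + 1) (j := k - 1)
      rw [show k - 1 + 1 = k by omega] at h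
      exact h.trans (le_sup_left.trans le_sup_left)

lemma map_koszul_S (r k : ℕ) :
    Submodule.map (koszul n) (Sspace n r (k + 1)) ≤ Sspace n (r + 1) k := by
  rw [Sspace, if_neg (Nat.succ_ne_zero k), Submodule.map_sup, Submodule.map_sup]
  refine sup_le (sup_le ?_ ?_) ?_
  · exact map_koszul_P.trans (le_sup_left.trans le_sup_left)
  · rintro x ⟨y, hy, rfl⟩
    rw [LinearMap.mem_ker.mp (J_le_ker hy)]
    exact Submodule.zero_mem _
  · simp only [Nat.add_sub_cancel]
    rw [Jspace, Submodule.map_iSup, Submodule.map_iSup]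
    refine iSup_le fun l => ?_
    rintro x ⟨y, ⟨z, ⟨w, hw, rfl⟩, rfl⟩, rfl⟩
    have hwH : w ∈ Hspace n (r + 1 + l) (k + 1) := Hl_le_H hw
    rw [kdk hwH]
    refine Submodule.smul_mem _ _ ?_
    have h1 : koszul n w ∈ Submodule.map (koszul n) (Hl n (r + 1 + l) (l + 1) (k + 1)) :=
      ⟨w, hw, rfl⟩
    have h2 : koszul n w ∈ Jspace n (r + 1) k :=
      le_iSup (fun l => Submodule.map (koszul n) (Hl n (r + 1 + l) (l + 1) (k + 1))) l h1
    exact (le_sup_right.trans le_sup_left : Jspace n (r + 1) k ≤ Sspace n (r + 1) k) h2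

end Main

/-- inclusion property
`S_rΛ^k(ℝ^n) ⊆ S_{r+1}^-Λ^k(ℝ^n) ⊆ S_{r+1}Λ^k(ℝ^n)`. -/
theorem Sminus_inclusion (n r k : ℕ) (hn : 1 ≤ n) (hr : 1 ≤ r) (hk : k ≤ n) :
    Sspace n r k ≤ SminusSpace n (r + 1) k ∧
    SminusSpace n (r + 1) k ≤ Sspace n (r + 1) k := by
  constructor
  · rw [SminusSpace]
    simp only [Nat.add_sub_cancel]
    exact le_sup_left
  · rw [SminusSpace]
    simp only [Nat.add_sub_cancel]
    exact sup_le (S_mono r k) (map_koszul_S r k)
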